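/- The fixed point of the ODE dQ/dt = 2η(βR* − ΔQ) + η²(Δ + Δ²Q − 2ΔβR*) with R* = β/Δ and β = √(2Δ/π) is Q* = (ηΔ + 2β²/Δ·(1 − ηΔ))/(2Δ − ηΔ²), valid for 0 < η < 2/Δ, and substituting into ε = 1 − 2βR* + ΔQ* yields ε_∞ = (1 − 2/π)/(1 − ηΔ/2). -/

import Mathlib

/-- Fixed point of the `Q`-ODE with `R* = β/Δ`, `β = √(2Δ/π)`:
`Q* = (ηΔ + 2β²/Δ (1 − ηΔ))/(2Δ − ηΔ²)`, and the resulting error is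
`(1 − 2/π)/(1 − ηΔ/2)`. -/
theorem stmt13 (Δ η Q : ℝ) (hΔ : 0 < Δ) (hη : 0 < η) (hη2 : η < 2 / Δ)
    (hQ : 2 * η * (Real.sqrt (2 * Δ / Real.pi) * (Real.sqrt (2 * Δ / Real.pi) / Δ) - Δ * Q)
        + η ^ 2 * (Δ + Δ ^ 2 * Q
          - 2 * Δ * Real.sqrt (2 * Δ / Real.pi) * (Real.sqrt (2 * Δ / Real.pi) / Δ)) = 0) :
    Q = (η * Δ + 2 * Real.sqrt (2 * Δ / Real.pi) ^ 2 / Δ * (1 - η * Δ)) / (2 * Δ - η * Δ ^ 2) ∧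
    1 - 2 * Real.sqrt (2 * Δ / Real.pi) * (Real.sqrt (2 * Δ / Real.pi) / Δ) + Δ * Q
        = (1 - 2 / Real.pi) / (1 - η * Δ / 2) := by
  have hπ : 0 < Real.pi := Real.pi_pos
  set b := Real.sqrt (2 * Δ / Real.pi) with hb
  have hb2 : b * b = 2 * Δ / Real.pi := by
    rw [hb]; exact Real.mul_self_sqrt (by positivity)
  have hηΔ : η * Δ < 2 := by
    have := (lt_div_iff₀ hΔ).mp hη2
    linarith
  have hden : 2 * Δ - η * Δ ^ 2 ≠ 0 := by nlinarith
  have hden2 : 1 - η * Δ / 2 ≠ 0 := by nlinarith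
  have hne : 2 - η * Δ ≠ 0 := by linarith
  have h1 : Q = (η * Δ + 2 * b ^ 2 / Δ * (1 - η * Δ)) / (2 * Δ - η * Δ ^ 2) := by
    field_simp at hQ ⊢
    nlinarith [hQ, sq_nonneg Δ, mul_pos hη hΔ]
  refine ⟨h1, ?_⟩
  rw [h1, show (2:ℝ) * b * (b / Δ) = 2 * (b * b) / Δ by ring, hb2,
    show b ^ 2 = b * b from sq b, hb2, eq_div_iff hden2]
  field_simp [show (2:ℝ) - Δ * η ≠ 0 by linarith [mul_comm Δ η]]
  ring
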